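/- arXiv:1609.04091 — 10 statements merged into one kernel-verified Lean document; each statement's English description precedes it below -/
import Mathlib

section
/- If a Horn-box modal formula (a conjunction of clauses of the form ∇(λ₁ ∧ … ∧ λₙ → λ), where each λᵢ is a positive literal built from ⊤, propositional letters, and boxes only, and ∇ is a possibly empty sequence of boxes) is satisfied at world w in two Kripke models M₁ and M₂ over the same frame, then it is satisfied at w in the intersection model whose valuation at each world is the intersection of the two valuations. -/
/-- A Kripke model: accessibility relations indexed by `ι`, valuation over letters `P`. -/
structure KModel (ι P W : Type) where
  rel : ι → W → W → Prop
  val : W → P → Prop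

/-- General positive literals: `⊤ | p | ◇_a λ | □_a λ`. -/
inductive PLit (ι P : Type) : Type
  | top : PLit ι P
  | atom : P → PLit ι P
  | dia : ι → PLit ι P → PLit ι P
  | box : ι → PLit ι P → PLit ι P

/-- Positive box-literals: `⊤ | p | □_a λ`. -/
inductive BLit (ι P : Type) : Type
  | top : BLit ι P
  | atom : P → BLit ι P
  | box : ι → BLit ι P → BLit ι P

/-- Positive diamond-literals: `⊤ | p | ◇_a λ`. -/
inductive DLit (ι P : Type) : Type
  | top : DLit ι P
  | atom : P → DLit ι P
  | dia : ι → DLit ι P → DLit ι P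

def PLit.sat {ι P W : Type} (M : KModel ι P W) : W → PLit ι P → Prop
  | _, .top => True
  | w, .atom p => M.val w p
  | w, .dia a l => ∃ v, M.rel a w v ∧ PLit.sat M v l
  | w, .box a l => ∀ v, M.rel a w v → PLit.sat M v l

def BLit.sat {ι P W : Type} (M : KModel ι P W) : W → BLit ι P → Prop
  | _, .top => True
  | w, .atom p => M.val w p
  | w, .box a l => ∀ v, M.rel a w v → BLit.sat M v l

def DLit.sat {ι P W : Type} (M : KModel ι P W) : W → DLit ι P → Prop
  | _, .top => True
  | w, .atom p => M.val w p
  | w, .dia a l => ∃ v, M.rel a w v ∧ DLit.sat M v l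

/-- Satisfaction of a property behind a prefix `∇` of universal modalities. -/
def nablaSat {ι P W : Type} (M : KModel ι P W) : List ι → W → (W → Prop) → Prop
  | [], w, Φ => Φ w
  | a :: rest, w, Φ => ∀ v, M.rel a w v → nablaSat M rest v Φ

/-- A Horn clause `∇(λ₁ ∧ … ∧ λₙ → μ)` with general positive literals;
`concl = none` encodes the consequent `⊥`. -/
structure HornClause (ι P : Type) where
  nabla : List ι
  ante : List (PLit ι P)
  concl : Option (PLit ι P)

def HornClause.sat {ι P W : Type} (M : KModel ι P W) (w : W) (c : HornClause ι P) : Prop :=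
  nablaSat M c.nabla w fun v =>
    (∀ l ∈ c.ante, PLit.sat M v l) → c.concl.elim False fun l => PLit.sat M v l

def hornSat {ι P W : Type} (M : KModel ι P W) (w : W) (φ : List (HornClause ι P)) : Prop :=
  ∀ c ∈ φ, c.sat M w

/-- A Horn-box clause: positive literals use boxes only. -/
structure HornBoxClause (ι P : Type) where
  nabla : List ι
  ante : List (BLit ι P)
  concl : Option (BLit ι P)

def HornBoxClause.sat {ι P W : Type} (M : KModel ι P W) (w : W) (c : HornBoxClause ι P) : Prop :=
  nablaSat M c.nabla w fun v =>
    (∀ l ∈ c.ante, BLit.sat M v l) → c.concl.elim False fun l => BLit.sat M v l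

def hornBoxSat {ι P W : Type} (M : KModel ι P W) (w : W) (φ : List (HornBoxClause ι P)) : Prop :=
  ∀ c ∈ φ, c.sat M w

/-- A Horn-diamond clause: positive literals use diamonds only. -/
structure HornDiaClause (ι P : Type) where
  nabla : List ι
  ante : List (DLit ι P)
  concl : Option (DLit ι P)

def HornDiaClause.sat {ι P W : Type} (M : KModel ι P W) (w : W) (c : HornDiaClause ι P) : Prop :=
  nablaSat M c.nabla w fun v =>
    (∀ l ∈ c.ante, DLit.sat M v l) → c.concl.elim False fun l => DLit.sat M v l

def hornDiaSat {ι P W : Type} (M : KModel ι P W) (w : W) (φ : List (HornDiaClause ι P)) : Prop :=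
  ∀ c ∈ φ, c.sat M w

/-- A signed literal: a positive literal or its negation (`pos = false`). -/
structure SLit (ι P : Type) where
  pos : Bool
  lit : PLit ι P

def SLit.sat {ι P W : Type} (M : KModel ι P W) (w : W) (l : SLit ι P) : Prop :=
  if l.pos then PLit.sat M w l.lit else ¬ PLit.sat M w l.lit

/-- A Krom clause `∇(ℓ₁ ∨ ℓ₂)`; `l2 = none` encodes a unit clause. -/
structure KromClause (ι P : Type) where
  nabla : List ι
  l1 : SLit ι P
  l2 : Option (SLit ι P)

def KromClause.sat {ι P W : Type} (M : KModel ι P W) (w : W) (c : KromClause ι P) : Prop :=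
  nablaSat M c.nabla w fun v =>
    SLit.sat M v c.l1 ∨ c.l2.elim False fun l => SLit.sat M v l

def kromSat {ι P W : Type} (M : KModel ι P W) (w : W) (φ : List (KromClause ι P)) : Prop :=
  ∀ c ∈ φ, c.sat M w

/-- A signed box-literal. -/
structure SBLit (ι P : Type) where
  pos : Bool
  lit : BLit ι P

def SBLit.sat {ι P W : Type} (M : KModel ι P W) (w : W) (l : SBLit ι P) : Prop :=
  if l.pos then BLit.sat M w l.lit else ¬ BLit.sat M w l.lit

/-- A Krom-box clause. -/
structure KromBoxClause (ι P : Type) where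
  nabla : List ι
  l1 : SBLit ι P
  l2 : Option (SBLit ι P)

def KromBoxClause.sat {ι P W : Type} (M : KModel ι P W) (w : W) (c : KromBoxClause ι P) : Prop :=
  nablaSat M c.nabla w fun v =>
    SBLit.sat M v c.l1 ∨ c.l2.elim False fun l => SBLit.sat M v l

def kromBoxSat {ι P W : Type} (M : KModel ι P W) (w : W) (φ : List (KromBoxClause ι P)) : Prop :=
  ∀ c ∈ φ, c.sat M w

/-- A signed diamond-literal. -/
structure SDLit (ι P : Type) where
  pos : Bool
  lit : DLit ι P

def SDLit.sat {ι P W : Type} (M : KModel ι P W) (w : W) (l : SDLit ι P) : Prop :=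
  if l.pos then DLit.sat M w l.lit else ¬ DLit.sat M w l.lit

/-- A Krom-diamond clause. -/
structure KromDiaClause (ι P : Type) where
  nabla : List ι
  l1 : SDLit ι P
  l2 : Option (SDLit ι P)

def KromDiaClause.sat {ι P W : Type} (M : KModel ι P W) (w : W) (c : KromDiaClause ι P) : Prop :=
  nablaSat M c.nabla w fun v =>
    SDLit.sat M v c.l1 ∨ c.l2.elim False fun l => SDLit.sat M v l

def kromDiaSat {ι P W : Type} (M : KModel ι P W) (w : W) (φ : List (KromDiaClause ι P)) : Prop :=
  ∀ c ∈ φ, c.sat M w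

/-- Renaming of propositional letters in a positive literal. -/
def PLit.map {ι P Q : Type} (f : P → Q) : PLit ι P → PLit ι Q
  | .top => .top
  | .atom p => .atom (f p)
  | .dia a l => .dia a (PLit.map f l)
  | .box a l => .box a (PLit.map f l)

def SLit.map {ι P Q : Type} (f : P → Q) (l : SLit ι P) : SLit ι Q :=
  ⟨l.pos, l.lit.map f⟩

def KromClause.map {ι P Q : Type} (f : P → Q) (c : KromClause ι P) : KromClause ι Q :=
  ⟨c.nabla, c.l1.map f, c.l2.map (SLit.map f)⟩

/-- The letter `q` occurs in the positive literal. -/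
def PLit.occurs {ι P : Type} (q : P) : PLit ι P → Prop
  | .top => False
  | .atom r => r = q
  | .dia _ l => PLit.occurs q l
  | .box _ l => PLit.occurs q l

/-- A positive literal containing no propositional letters. -/
def PLit.letterFree {ι P : Type} : PLit ι P → Prop
  | .top => True
  | .atom _ => False
  | .dia _ l => PLit.letterFree l
  | .box _ l => PLit.letterFree l

/-- The letter `q` occurs in the Krom clause. -/
def KromClause.occurs {ι P : Type} (c : KromClause ι P) (q : P) : Prop :=
  PLit.occurs q c.l1.lit ∨ c.l2.elim False fun l => PLit.occurs q l.lit

/-- Horn-box formulas are closed under intersection of models. -/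
theorem hornBox_closed_under_intersection {ι P W : Type}
    (rel : ι → W → W → Prop) (V₁ V₂ : W → P → Prop)
    (φ : List (HornBoxClause ι P)) (w : W)
    (h₁ : hornBoxSat ⟨rel, V₁⟩ w φ) (h₂ : hornBoxSat ⟨rel, V₂⟩ w φ) :
    hornBoxSat ⟨rel, fun u p => V₁ u p ∧ V₂ u p⟩ w φ := by
  have key : ∀ (l : BLit ι P) (v : W),
      BLit.sat ⟨rel, fun u p => V₁ u p ∧ V₂ u p⟩ v l ↔
        (BLit.sat ⟨rel, V₁⟩ v l ∧ BLit.sat ⟨rel, V₂⟩ v l) := by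
    intro l
    induction l with
    | top => intro v; simp [BLit.sat]
    | atom p => intro v; simp [BLit.sat]
    | box a l ih =>
      intro v
      simp only [BLit.sat]
      constructor
      · intro h
        exact ⟨fun u hu => ((ih u).1 (h u hu)).1, fun u hu => ((ih u).1 (h u hu)).2⟩
      · rintro ⟨h1, h2⟩ u hu
        exact (ih u).2 ⟨h1 u hu, h2 u hu⟩
  have nab : ∀ (L : List ι) (v : W) (Φ₁ Φ₂ Φ : W → Prop),
      (∀ u, Φ₁ u → Φ₂ u → Φ u) →
      nablaSat ⟨rel, V₁⟩ L v Φ₁ → nablaSat ⟨rel, V₂⟩ L v Φ₂ →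
      nablaSat ⟨rel, fun u p => V₁ u p ∧ V₂ u p⟩ L v Φ := by
    intro L
    induction L with
    | nil => intro v Φ₁ Φ₂ Φ h h1 h2; exact h v h1 h2
    | cons a rest ih =>
      intro v Φ₁ Φ₂ Φ h h1 h2 u hu
      exact ih u Φ₁ Φ₂ Φ h (h1 u hu) (h2 u hu)
  intro c hc
  have h1 := h₁ c hc
  have h2 := h₂ c hc
  unfold HornBoxClause.sat at *
  refine nab c.nabla w _ _ _ ?_ h1 h2
  intro u g1 g2 hante
  have a1 : ∀ l ∈ c.ante, BLit.sat ⟨rel, V₁⟩ u l := fun l hl => ((key l u).1 (hante l hl)).1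
  have a2 : ∀ l ∈ c.ante, BLit.sat ⟨rel, V₂⟩ u l := fun l hl => ((key l u).1 (hante l hl)).2
  cases hcl : c.concl with
  | none => rw [hcl] at g1; exact (g1 a1).elim
  | some l =>
    rw [hcl] at g1 g2
    exact (key l u).2 ⟨g1 a1, g2 a2⟩
end

section
/- If a Horn-diamond modal formula (conjunction of clauses ∇(λ₁ ∧ … ∧ λₙ → λ) where each positive literal is built from ⊤, propositional letters, and diamonds only, and ∇ is a sequence of boxes) is satisfied at w₁ in model M₁ and at w₂ in model M₂, then it is satisfied at (w₁, w₂) in the product model. -/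
section Aux
variable {ι P W₁ W₂ : Type} {M₁ : KModel ι P W₁} {M₂ : KModel ι P W₂}

def KModel.prod (M₁ : KModel ι P W₁) (M₂ : KModel ι P W₂) : KModel ι P (W₁ × W₂) :=
  ⟨fun a x y => M₁.rel a x.1 y.1 ∧ M₂.rel a x.2 y.2,
   fun x p => M₁.val x.1 p ∧ M₂.val x.2 p⟩

lemma dlit_prod_iff (l : DLit ι P) : ∀ x : W₁ × W₂,
    DLit.sat (M₁.prod M₂) x l ↔ DLit.sat M₁ x.1 l ∧ DLit.sat M₂ x.2 l := by
  induction l with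
  | top => simp [DLit.sat]
  | atom p => intro x; simp [DLit.sat, KModel.prod]
  | dia a l ih =>
    intro x
    constructor
    · rintro ⟨v, ⟨r1, r2⟩, hv⟩
      rw [ih] at hv
      exact ⟨⟨v.1, r1, hv.1⟩, ⟨v.2, r2, hv.2⟩⟩
    · rintro ⟨⟨v1, r1, h1⟩, ⟨v2, r2, h2⟩⟩
      exact ⟨(v1, v2), ⟨r1, r2⟩, (ih _).2 ⟨h1, h2⟩⟩

lemma nabla_prod {Φ₁ : W₁ → Prop} {Φ₂ : W₂ → Prop} {Φ : W₁ × W₂ → Prop}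
    (hΦ : ∀ x : W₁ × W₂, Φ₁ x.1 → Φ₂ x.2 → Φ x) :
    ∀ (n : List ι) (w₁ : W₁) (w₂ : W₂), nablaSat M₁ n w₁ Φ₁ → nablaSat M₂ n w₂ Φ₂ →
      nablaSat (M₁.prod M₂) n (w₁, w₂) Φ := by
  intro n
  induction n with
  | nil => intro w₁ w₂ h1 h2; exact hΦ _ h1 h2
  | cons a rest ih =>
    rintro w₁ w₂ h1 h2 ⟨v1, v2⟩ ⟨r1, r2⟩
    exact ih v1 v2 (h1 v1 r1) (h2 v2 r2)

end Aux

/-- Horn-diamond formulas are closed under product of models. -/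
theorem hornDia_closed_under_product {ι P W₁ W₂ : Type}
    (rel₁ : ι → W₁ → W₁ → Prop) (rel₂ : ι → W₂ → W₂ → Prop)
    (V₁ : W₁ → P → Prop) (V₂ : W₂ → P → Prop)
    (φ : List (HornDiaClause ι P)) (w₁ : W₁) (w₂ : W₂)
    (h₁ : hornDiaSat ⟨rel₁, V₁⟩ w₁ φ) (h₂ : hornDiaSat ⟨rel₂, V₂⟩ w₂ φ) :
    hornDiaSat
      ⟨fun a x y => rel₁ a x.1 y.1 ∧ rel₂ a x.2 y.2,
       fun x p => V₁ x.1 p ∧ V₂ x.2 p⟩ (w₁, w₂) φ := by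
  intro c hc
  have H1 := h₁ c hc
  have H2 := h₂ c hc
  unfold HornDiaClause.sat at *
  exact nabla_prod (M₁ := ⟨rel₁, V₁⟩) (M₂ := ⟨rel₂, V₂⟩)
    (fun x p1 p2 hante => by
      have a1 : ∀ l ∈ c.ante, DLit.sat ⟨rel₁, V₁⟩ x.1 l :=
        fun l hl => ((dlit_prod_iff (M₁ := ⟨rel₁, V₁⟩) (M₂ := ⟨rel₂, V₂⟩) l x).1 (hante l hl)).1
      have a2 : ∀ l ∈ c.ante, DLit.sat ⟨rel₂, V₂⟩ x.2 l :=
        fun l hl => ((dlit_prod_iff (M₁ := ⟨rel₁, V₁⟩) (M₂ := ⟨rel₂, V₂⟩) l x).1 (hante l hl)).2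
      cases hco : c.concl with
      | none => exact absurd (p1 a1) (by simp [hco])
      | some l =>
        simp only [hco, Option.elim] at p1 p2 ⊢
        exact (dlit_prod_iff (M₁ := ⟨rel₁, V₁⟩) (M₂ := ⟨rel₂, V₂⟩) l x).2 ⟨p1 a1, p2 a2⟩)
    c.nabla w₁ w₂ H1 H2
end

section
/- There is no Horn formula of multimodal logic K_N over the propositional alphabet {p, q} that is equivalent to p ∨ q, i.e., no conjunction of Horn clauses φ over {p,q} such that for every Kripke model M and world w, M,w ⊩ p ∨ q iff M,w ⊩ φ. -/
/-- A one-world model with no accessibility and valuation `v`. -/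
def M0 (ι : Type) (v : Bool → Prop) : KModel ι Bool Unit :=
  ⟨fun _ _ _ => False, fun _ => v⟩

lemma sat_mono {ι : Type} (v : Bool → Prop) :
    ∀ l : PLit ι Bool, PLit.sat (M0 ι fun _ => False) () l → PLit.sat (M0 ι v) () l := by
  intro l
  induction l with
  | top => intro _; trivial
  | atom r => intro h; exact h.elim
  | dia a l ih => rintro ⟨⟨⟩, h, _⟩; exact h.elim
  | box a l ih => intro _ v hv; exact hv.elim

lemma sat_inter {ι : Type} :
    ∀ l : PLit ι Bool,
      PLit.sat (M0 ι fun b => b = false) () l →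
      PLit.sat (M0 ι fun b => b = true) () l →
      PLit.sat (M0 ι fun _ => False) () l := by
  intro l
  induction l with
  | top => intro _ _; trivial
  | atom r => intro h1 h2; exact Bool.noConfusion (h1 ▸ h2)
  | dia a l ih => rintro ⟨⟨⟩, h, _⟩; exact h.elim
  | box a l ih => intro _ _ v hv; exact hv.elim

/-- no Horn formula over the alphabet `{p, q}` (encoded as
`Bool`, `p = false`, `q = true`) is equivalent to `p ∨ q`. -/
theorem no_horn_translation_of_or (ι : Type) :
    ¬ ∃ φ : List (HornClause ι Bool),
      ∀ (W : Type) (M : KModel ι Bool W) (w : W),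
        (M.val w false ∨ M.val w true) ↔ hornSat M w φ := by
  rintro ⟨φ, h⟩
  have hA : hornSat (M0 ι fun b => b = false) () φ :=
    (h Unit _ ()).mp (Or.inl rfl)
  have hB : hornSat (M0 ι fun b => b = true) () φ :=
    (h Unit _ ()).mp (Or.inr rfl)
  have hC : hornSat (M0 ι fun _ => False) () φ := by
    intro c hc
    obtain ⟨nab, ante, concl⟩ := c
    cases nab with
    | cons a rest =>
      intro v hv; exact hv.elim
    | nil =>
      have hA' := hA _ hc
      have hB' := hB _ hc
      simp only [HornClause.sat, nablaSat] at hA' hB' ⊢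
      intro hante
      have hAc := hA' fun l hl => sat_mono _ l (hante l hl)
      have hBc := hB' fun l hl => sat_mono _ l (hante l hl)
      cases concl with
      | none => exact hAc
      | some l => exact sat_inter l hAc hBc
  exact ((h Unit _ ()).mpr hC).elim id id
end

section
/- There is no Krom formula of multimodal logic K_N over the propositional alphabet {p, q, r} that is equivalent to (p ∧ q) → r, i.e., no conjunction of at-most-binary clauses φ over {p,q,r} such that for every Kripke model M and world w, M,w ⊩ (p ∧ q → r) iff M,w ⊩ φ. -/
section Aux

variable {ι : Type}

/-- Single-world model with empty relations and valuation `v`. -/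
def Mof (ι : Type) (v : Fin 3 → Prop) : KModel ι (Fin 3) Unit :=
  ⟨fun _ _ _ => False, fun _ i => v i⟩

def Med (a b c : Prop) : Prop := (a ∧ b) ∨ (a ∧ c) ∨ (b ∧ c)

lemma plit_med (v1 v2 v3 : Fin 3 → Prop) (l : PLit ι (Fin 3)) :
    PLit.sat (Mof ι (fun p => Med (v1 p) (v2 p) (v3 p))) () l ↔
      Med (PLit.sat (Mof ι v1) () l) (PLit.sat (Mof ι v2) () l)
          (PLit.sat (Mof ι v3) () l) := by
  cases l with
  | top => simp [PLit.sat, Med]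
  | atom p => simp [PLit.sat, Mof, Med]
  | dia a l => simp [PLit.sat, Mof, Med]
  | box a l => simp [PLit.sat, Mof, Med]

lemma slit_med (v1 v2 v3 : Fin 3 → Prop) (s : SLit ι (Fin 3)) :
    SLit.sat (Mof ι (fun p => Med (v1 p) (v2 p) (v3 p))) () s ↔
      Med (SLit.sat (Mof ι v1) () s) (SLit.sat (Mof ι v2) () s)
          (SLit.sat (Mof ι v3) () s) := by
  obtain ⟨pos, lit⟩ := s
  have h := plit_med v1 v2 v3 lit
  cases pos <;> simp only [SLit.sat] <;> simp <;> unfold Med at h ⊢ <;> tauto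

lemma oslit_med (v1 v2 v3 : Fin 3 → Prop) (o : Option (SLit ι (Fin 3))) :
    o.elim False (fun l => SLit.sat (Mof ι (fun p => Med (v1 p) (v2 p) (v3 p))) () l) ↔
      Med (o.elim False fun l => SLit.sat (Mof ι v1) () l)
          (o.elim False fun l => SLit.sat (Mof ι v2) () l)
          (o.elim False fun l => SLit.sat (Mof ι v3) () l) := by
  cases o with
  | none => simp [Med]
  | some s => exact slit_med v1 v2 v3 s

lemma clause_med (v1 v2 v3 : Fin 3 → Prop) (c : KromClause ι (Fin 3))
    (h1 : c.sat (Mof ι v1) ()) (h2 : c.sat (Mof ι v2) ()) (h3 : c.sat (Mof ι v3) ()) :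
    c.sat (Mof ι (fun p => Med (v1 p) (v2 p) (v3 p))) () := by
  unfold KromClause.sat at *
  cases hn : c.nabla with
  | cons a rest =>
      simp only [hn, nablaSat]
      intro v hv; exact hv.elim
  | nil =>
      simp only [hn, nablaSat] at h1 h2 h3 ⊢
      rw [slit_med v1 v2 v3, oslit_med v1 v2 v3]
      unfold Med
      tauto

end Aux

/-- no Krom formula over the alphabet `{p, q, r}` (encoded as
`Fin 3`, `p = 0`, `q = 1`, `r = 2`) is equivalent to `(p ∧ q) → r`. -/
theorem no_krom_translation_of_pq_imp_r (ι : Type) :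
    ¬ ∃ φ : List (KromClause ι (Fin 3)),
      ∀ (W : Type) (M : KModel ι (Fin 3) W) (w : W),
        ((M.val w 0 ∧ M.val w 1) → M.val w 2) ↔ kromSat M w φ := by
  rintro ⟨φ, h⟩
  set v1 : Fin 3 → Prop := ![True, False, False] with hv1
  set v2 : Fin 3 → Prop := ![False, True, False] with hv2
  set v3 : Fin 3 → Prop := ![True, True, True] with hv3
  have s1 : kromSat (Mof ι v1) () φ :=
    (h Unit (Mof ι v1) ()).mp (by rintro ⟨-, hq⟩; simp [Mof, hv1] at hq)
  have s2 : kromSat (Mof ι v2) () φ :=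
    (h Unit (Mof ι v2) ()).mp (by rintro ⟨hp, -⟩; simp [Mof, hv2] at hp)
  have s3 : kromSat (Mof ι v3) () φ :=
    (h Unit (Mof ι v3) ()).mp (by intro _; simp [Mof, hv3])
  have sm : kromSat (Mof ι (fun p => Med (v1 p) (v2 p) (v3 p))) () φ :=
    fun c hc => clause_med v1 v2 v3 c (s1 c hc) (s2 c hc) (s3 c hc)
  have := (h Unit (Mof ι (fun p => Med (v1 p) (v2 p) (v3 p))) ()).mpr sm
  simp [Mof, Med, hv1, hv2, hv3] at this
end

section
/- There is no Horn-box formula φ over any extension P' ⊇ {p} of the propositional alphabet such that for every Kripke model M over {p} and every world w, M,w ⊩ ◇_α p iff some extension of M to P' satisfies φ at w. In other words, ◇_α p is not model-conservatively rewritable into the Horn-box fragment. -/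
lemma BLit.sat_mono {ι P W : Type} {rel : ι → W → W → Prop} {V V' : W → P → Prop}
    (h : ∀ u q, V u q → V' u q) :
    ∀ {l : BLit ι P} {w : W}, BLit.sat ⟨rel, V⟩ w l → BLit.sat ⟨rel, V'⟩ w l
  | .top, _, _ => trivial
  | .atom q, w, hs => h w q hs
  | .box a l, w, hs => fun v hv => BLit.sat_mono h (hs v hv)

lemma BLit.sat_inter {ι P W : Type} {rel : ι → W → W → Prop} {V1 V2 : W → P → Prop} :
    ∀ {l : BLit ι P} {w : W}, BLit.sat ⟨rel, V1⟩ w l → BLit.sat ⟨rel, V2⟩ w l →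
      BLit.sat ⟨rel, fun u q => V1 u q ∧ V2 u q⟩ w l
  | .top, _, _, _ => trivial
  | .atom _, _, h1, h2 => ⟨h1, h2⟩
  | .box a l, w, h1, h2 => fun v hv => BLit.sat_inter (h1 v hv) (h2 v hv)

lemma nablaSat_combine {ι P W : Type} (M : KModel ι P W) {Φ1 Φ2 Φ : W → Prop}
    (h : ∀ v, Φ1 v → Φ2 v → Φ v) :
    ∀ (n : List ι) (w : W), nablaSat M n w Φ1 → nablaSat M n w Φ2 → nablaSat M n w Φ
  | [], w, h1, h2 => h w h1 h2
  | a :: rest, w, h1, h2 => fun v hv =>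
      nablaSat_combine M h rest v (h1 v hv) (h2 v hv)

lemma nablaSat_relEq {ι P Q W : Type} {rel : ι → W → W → Prop} {V : W → P → Prop}
    {V' : W → Q → Prop} {Φ : W → Prop} :
    ∀ (n : List ι) (w : W), nablaSat ⟨rel, V⟩ n w Φ → nablaSat ⟨rel, V'⟩ n w Φ
  | [], _, h => h
  | a :: rest, w, h => fun v hv => nablaSat_relEq rest v (h v hv)

lemma hornBoxSat_inter {ι P W : Type} {rel : ι → W → W → Prop} {V1 V2 : W → P → Prop}
    {w : W} {φ : List (HornBoxClause ι P)}
    (h1 : hornBoxSat ⟨rel, V1⟩ w φ) (h2 : hornBoxSat ⟨rel, V2⟩ w φ) :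
    hornBoxSat ⟨rel, fun u q => V1 u q ∧ V2 u q⟩ w φ := by
  intro c hc
  have hc1 := h1 c hc
  have hc2 := h2 c hc
  unfold HornBoxClause.sat at *
  have hc1' := nablaSat_relEq (V' := fun u q => V1 u q ∧ V2 u q) c.nabla w hc1
  have hc2' := nablaSat_relEq (V' := fun u q => V1 u q ∧ V2 u q) c.nabla w hc2
  refine nablaSat_combine _ ?_ c.nabla w hc1' hc2'
  intro v g1 g2 hante
  have ha1 : ∀ l ∈ c.ante, BLit.sat ⟨rel, V1⟩ v l := fun l hl =>
    BLit.sat_mono (fun u q h => h.1) (hante l hl)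
  have ha2 : ∀ l ∈ c.ante, BLit.sat ⟨rel, V2⟩ v l := fun l hl =>
    BLit.sat_mono (fun u q h => h.2) (hante l hl)
  cases hco : c.concl with
  | none =>
      have := g1 ha1; rw [hco] at this; exact this
  | some l =>
      have e1 : BLit.sat ⟨rel, V1⟩ v l := by have := g1 ha1; rw [hco] at this; exact this
      have e2 : BLit.sat ⟨rel, V2⟩ v l := by have := g2 ha2; rw [hco] at this; exact this
      exact BLit.sat_inter e1 e2

/-- `◇_a p` is not model-conservatively rewritable into the
Horn-box fragment: there is no extended alphabet `P'` (with a letter `p`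
playing the role of the original letter) and Horn-box formula `φ` over `P'`
such that, for every model over `{p}` and world `w`, `◇_a p` holds at `w`
iff some extension of the model to `P'` satisfies `φ` at `w`. -/
theorem dia_p_not_rewritable_hornBox (ι : Type) (a : ι) :
    ¬ ∃ (P' : Type) (p : P') (φ : List (HornBoxClause ι P')),
      ∀ (W : Type) (rel : ι → W → W → Prop) (V : W → Prop) (w : W),
        (∃ v, rel a w v ∧ V v) ↔
        ∃ V' : W → P' → Prop,
          (∀ u, V' u p ↔ V u) ∧ hornBoxSat ⟨rel, V'⟩ w φ := by
  rintro ⟨P', p, φ, h⟩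
  set W := Fin 3
  set rel : ι → W → W → Prop := fun i w v => i = a ∧ w = 0 ∧ (v = 1 ∨ v = 2) with hrel
  set V1 : W → Prop := fun v => v = 1
  set V2 : W → Prop := fun v => v = 2
  obtain ⟨V1', hp1, hs1⟩ := (h W rel V1 0).mp ⟨1, ⟨rfl, rfl, Or.inl rfl⟩, rfl⟩
  obtain ⟨V2', hp2, hs2⟩ := (h W rel V2 0).mp ⟨2, ⟨rfl, rfl, Or.inr rfl⟩, rfl⟩
  have hs := hornBoxSat_inter hs1 hs2
  have : ∃ v, rel a (0 : W) v ∧ (V1 v ∧ V2 v) := by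
    refine (h W rel (fun v => V1 v ∧ V2 v) 0).mpr
      ⟨fun u q => V1' u q ∧ V2' u q, fun u => ?_, hs⟩
    exact and_congr (hp1 u) (hp2 u)
  obtain ⟨v, _, hv1, hv2⟩ := this
  simp only [V1, V2] at hv1 hv2
  exact absurd (hv1 ▸ hv2) (by decide)
end

section
/- There is no Horn-diamond formula φ over any extension P' ⊇ {p, q} of the propositional alphabet such that for every Kripke model M over {p, q} and every world w, M,w ⊩ (□_α p → q) iff some extension of M to P' satisfies φ at w. In other words, □_α p → q is not model-conservatively rewritable into the Horn-diamond fragment. -/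
section ProdAux

variable {ι P W1 W2 : Type} (M1 : KModel ι P W1) (M2 : KModel ι P W2)

/-- Product of two models. -/
def prodModel : KModel ι P (W1 × W2) :=
  ⟨fun b x y => M1.rel b x.1 y.1 ∧ M2.rel b x.2 y.2,
   fun x r => M1.val x.1 r ∧ M2.val x.2 r⟩

lemma dlit_proj1 : ∀ (l : DLit ι P) (x : W1 × W2),
    DLit.sat (prodModel M1 M2) x l → DLit.sat M1 x.1 l
  | .top, _, _ => trivial
  | .atom _, _, h => h.1
  | .dia _ l, _, ⟨v, hv, hs⟩ => ⟨v.1, hv.1, dlit_proj1 l v hs⟩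

lemma dlit_proj2 : ∀ (l : DLit ι P) (x : W1 × W2),
    DLit.sat (prodModel M1 M2) x l → DLit.sat M2 x.2 l
  | .top, _, _ => trivial
  | .atom _, _, h => h.2
  | .dia _ l, _, ⟨v, hv, hs⟩ => ⟨v.2, hv.2, dlit_proj2 l v hs⟩

lemma dlit_pair : ∀ (l : DLit ι P) (x1 : W1) (x2 : W2),
    DLit.sat M1 x1 l → DLit.sat M2 x2 l → DLit.sat (prodModel M1 M2) (x1, x2) l
  | .top, _, _, _, _ => trivial
  | .atom _, _, _, h1, h2 => ⟨h1, h2⟩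
  | .dia _ l, _, _, ⟨v1, hv1, hs1⟩, ⟨v2, hv2, hs2⟩ =>
      ⟨(v1, v2), ⟨hv1, hv2⟩, dlit_pair l v1 v2 hs1 hs2⟩

lemma nabla_prod_s10 : ∀ (n : List ι) (w1 : W1) (w2 : W2)
    (Φ1 : W1 → Prop) (Φ2 : W2 → Prop) (Φ : W1 × W2 → Prop),
    nablaSat M1 n w1 Φ1 → nablaSat M2 n w2 Φ2 →
    (∀ v1 v2, Φ1 v1 → Φ2 v2 → Φ (v1, v2)) →
    nablaSat (prodModel M1 M2) n (w1, w2) Φ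
  | [], _, _, _, _, _, h1, h2, hΦ => hΦ _ _ h1 h2
  | _ :: rest, _, _, _, _, _, h1, h2, hΦ => fun v hv =>
      nabla_prod_s10 rest v.1 v.2 _ _ _ (h1 v.1 hv.1) (h2 v.2 hv.2) hΦ

lemma hornDiaClause_prod (c : HornDiaClause ι P) (w1 : W1) (w2 : W2)
    (h1 : c.sat M1 w1) (h2 : c.sat M2 w2) :
    c.sat (prodModel M1 M2) (w1, w2) := by
  refine nabla_prod_s10 M1 M2 c.nabla w1 w2 _ _ _ h1 h2 ?_
  intro v1 v2 hv1 hv2 hante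
  have ha1 : ∀ l ∈ c.ante, DLit.sat M1 v1 l := fun l hl =>
    dlit_proj1 M1 M2 l (v1, v2) (hante l hl)
  have ha2 : ∀ l ∈ c.ante, DLit.sat M2 v2 l := fun l hl =>
    dlit_proj2 M1 M2 l (v1, v2) (hante l hl)
  have hc1 := hv1 ha1
  have hc2 := hv2 ha2
  cases hcon : c.concl with
  | none => rw [hcon] at hc1; exact hc1.elim
  | some l =>
      rw [hcon] at hc1 hc2
      exact dlit_pair M1 M2 l v1 v2 hc1 hc2

end ProdAux

/-- `□_a p → q` is not model-conservatively rewritable into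
the Horn-diamond fragment. The alphabet `{p, q}` is encoded as `Bool`
(`p = false`, `q = true`), embedded in an arbitrary extension `P'`. -/
theorem box_imp_not_rewritable_hornDia (ι : Type) (a : ι) :
    ¬ ∃ (P' : Type) (i : Bool ↪ P') (φ : List (HornDiaClause ι P')),
      ∀ (W : Type) (rel : ι → W → W → Prop) (V : W → Bool → Prop) (w : W),
        ((∀ v, rel a w v → V v false) → V w true) ↔
        ∃ V' : W → P' → Prop,
          (∀ u b, V' u (i b) ↔ V u b) ∧ hornDiaSat ⟨rel, V'⟩ w φ := by
  rintro ⟨P', i, φ, H⟩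
  -- Model 1: two worlds, edge from `false` to `true`, empty valuation.
  set rel1 : ι → Bool → Bool → Prop := fun _ x y => x = false ∧ y = true with hrel1
  set V1 : Bool → Bool → Prop := fun _ _ => False with hV1
  obtain ⟨V1', hext1, hsat1⟩ := (H Bool rel1 V1 false).mp
    (fun h => absurd (h true ⟨rfl, rfl⟩) (fun hf => hf))
  -- Model 2: one world, no edges, `q` true.
  set rel2 : ι → Unit → Unit → Prop := fun _ _ _ => False with hrel2
  set V2 : Unit → Bool → Prop := fun _ b => b = true with hV2
  obtain ⟨V2', hext2, hsat2⟩ := (H Unit rel2 V2 ()).mp (fun _ => rfl)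
  -- Product model
  set M1 : KModel ι P' Bool := ⟨rel1, V1'⟩ with hM1
  set M2 : KModel ι P' Unit := ⟨rel2, V2'⟩ with hM2
  set Mp : KModel ι P' (Bool × Unit) := prodModel M1 M2 with hMp
  set Vp : Bool × Unit → Bool → Prop := fun x b => V1 x.1 b ∧ V2 x.2 b with hVp
  have hsatp : hornDiaSat Mp (false, ()) φ := fun c hc =>
    hornDiaClause_prod M1 M2 c false () (hsat1 c hc) (hsat2 c hc)
  have := (H (Bool × Unit) Mp.rel Vp (false, ())).mpr
    ⟨Mp.val, fun u b => by
        simp only [hMp, prodModel, hM1, hM2]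
        rw [show (Vp u b) = (V1 u.1 b ∧ V2 u.2 b) from rfl,
          ← hext1 u.1 b, ← hext2 u.2 b],
      hsatp⟩
  have hfinal := this (fun v hv => absurd hv.2 (fun hf => hf))
  exact hfinal.1
end

section
/- There is no Krom-box formula φ over the single-letter propositional alphabet {p} that is equivalent to ◇_α p: no conjunction of clauses ∇(ℓ₁ ∨ ℓ₂), where literals are positive box-literals or their negations, such that for every model M over {p} and world w, M,w ⊩ ◇_α p iff M,w ⊩ φ. -/
def R2 (ι : Type) : ι → Bool → Bool → Prop := fun _ x y => x = false ∧ y = true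
def V2 : Bool → Unit → Prop := fun x _ => x = true

lemma blit_sat_true (ι : Type) (l : BLit ι Unit) :
    BLit.sat ⟨R2 ι, V2⟩ true l := by
  induction l with
  | top => trivial
  | atom p => simp [BLit.sat, V2]
  | box b l ih => intro v hv; exact absurd hv.1 (by simp)

lemma slit_transfer (ι : Type) (l : SBLit ι Unit) (h2 : SBLit.sat ⟨R2 ι, V2⟩ false l) :
    SBLit.sat ⟨fun _ _ _ => False, fun _ _ => False⟩ (false : Bool) l := by
  rcases l with ⟨pos, lit⟩
  cases pos with
  | true =>
    simp only [SBLit.sat, if_true] at h2 ⊢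
    cases lit with
    | top => trivial
    | atom p => simp [BLit.sat, V2, R2] at h2
    | box b l => intro v hv; exact hv.elim
  | false =>
    simp only [SBLit.sat, if_false, Bool.false_eq_true] at h2 ⊢
    cases lit with
    | top => exact absurd trivial h2
    | atom p => simp [BLit.sat]
    | box b l =>
      exfalso
      apply h2
      intro v hv
      have hv2 : v = true := hv.2
      subst hv2
      exact blit_sat_true ι l

/-- no Krom-box formula over the single-letter alphabet `{p}`
(encoded as `Unit`) is equivalent to `◇_a p`. -/
theorem no_kromBox_translation_of_dia_p (ι : Type) (a : ι) :
    ¬ ∃ φ : List (KromBoxClause ι Unit),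
      ∀ (W : Type) (rel : ι → W → W → Prop) (V : W → Unit → Prop) (w : W),
        (∃ v, rel a w v ∧ V v ()) ↔ kromBoxSat ⟨rel, V⟩ w φ := by
  rintro ⟨φ, h⟩
  have h0 := h Bool (fun _ _ _ => False) (fun _ _ => False) false
  have h2 := h Bool (R2 ι) V2 false
  have hsat2 : kromBoxSat ⟨R2 ι, V2⟩ false φ := h2.mp ⟨true, ⟨rfl, rfl⟩, rfl⟩
  have hnot0 : ¬ kromBoxSat ⟨fun _ _ _ => False, fun _ _ => False⟩ (false : Bool) φ := by
    intro hs
    obtain ⟨v, hv, _⟩ := h0.mpr hs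
    exact hv
  unfold kromBoxSat at hnot0
  push_neg at hnot0
  obtain ⟨c, hc, hcns⟩ := hnot0
  have hc2 := hsat2 c hc
  cases hn : c.nabla with
  | cons b rest =>
    apply hcns
    unfold KromBoxClause.sat
    rw [hn]
    intro v hv
    exact hv.elim
  | nil =>
    unfold KromBoxClause.sat at hcns hc2
    rw [hn] at hcns hc2
    simp only [nablaSat] at hcns hc2
    rcases hc2 with h1 | h2'
    · exact hcns (Or.inl (slit_transfer ι c.l1 h1))
    · cases ho : c.l2 with
      | none => rw [ho] at h2'; exact h2'
      | some l =>
        rw [ho] at h2'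
        apply hcns
        rw [ho]
        exact Or.inr (slit_transfer ι l h2')
end

section
/- Let M be a Kripke model, w a world with at least one R_α-successor, and M* the extension of M by a fresh world w* with w R_α w* and empty valuation at w*. Then for every positive diamond-literal λ (λ ::= ⊤ | p | ◇_β λ) and every old world t: M,t ⊩ λ iff M*,t ⊩ λ. -/
/-- if `w` has at least one `a`-successor, adding a fresh world
`w*` as an extra `a`-successor of `w` with empty valuation does not change the
truth of any positive diamond-literal at any old world. -/
theorem dlit_sat_iff_extension_empty {ι P W : Type}
    (a : ι) (rel : ι → W → W → Prop) (V : W → P → Prop) (w : W)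
    (hsucc : ∃ v, rel a w v) :
    ∀ (l : DLit ι P) (t : W),
      DLit.sat ⟨rel, V⟩ t l ↔
      DLit.sat
        (⟨fun b x y =>
            match x, y with
            | .inl u, .inl v => rel b u v
            | .inl u, .inr _ => b = a ∧ u = w
            | .inr _, _ => False,
          fun x p =>
            match x with
            | .inl u => V u p
            | .inr _ => False⟩ : KModel ι P (W ⊕ Unit))
        (.inl t) l := by
  set Mstar : KModel ι P (W ⊕ Unit) :=
    ⟨fun b x y =>
        match x, y with
        | .inl u, .inl v => rel b u v
        | .inl u, .inr _ => b = a ∧ u = w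
        | .inr _, _ => False,
      fun x p =>
        match x with
        | .inl u => V u p
        | .inr _ => False⟩ with hM
  have hstar : ∀ (l : DLit ι P) (u : Unit) (t : W),
      DLit.sat Mstar (.inr u) l → DLit.sat ⟨rel, V⟩ t l := by
    intro l
    induction l with
    | top => intro _ _ _; trivial
    | atom p => intro _ _ h; exact absurd h (by simp [DLit.sat, hM])
    | dia b l ih =>
      intro u t h
      obtain ⟨v, hv, _⟩ := h
      cases v <;> exact absurd hv (by simp [hM])
  intro l
  induction l with
  | top => intro t; simp [DLit.sat]
  | atom p => intro t; simp [DLit.sat, hM]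
  | dia b l ih =>
    intro t
    constructor
    · rintro ⟨v, hv, hsat⟩
      exact ⟨.inl v, hv, (ih v).mp hsat⟩
    · rintro ⟨v, hv, hsat⟩
      cases v with
      | inl v => exact ⟨v, hv, (ih v).mpr hsat⟩
      | inr u =>
        obtain ⟨hb, ht⟩ := hv
        obtain ⟨v0, hv0⟩ := hsucc
        subst hb ht
        exact ⟨v0, hv0, hstar l u v0 hsat⟩
end

section
/- There is no Krom-diamond formula φ over the propositional alphabet {p, q} that is equivalent to □_α p → q: no conjunction of clauses ∇(ℓ₁ ∨ ℓ₂), where literals are positive diamond-literals or their negations, such that for every model M over {p, q} and world w, M,w ⊩ (□_α p → q) iff M,w ⊩ φ. -/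
section NoKromDia

variable {ι : Type}

/-- Bad model: worlds `Bool`, `false` is the root `w`, `true` is `u`;
every relation has exactly the edge `w → u`; `p` true only at `u`. -/
def Mb (ι : Type) : KModel ι Bool Bool :=
  ⟨fun _ x y => x = false ∧ y = true, fun x b => x = true ∧ b = false⟩

/-- Good model: extra successor `none` of the root with `p` false. -/
def Mg (ι : Type) : KModel ι Bool (Option Bool) :=
  ⟨fun _ x y => x = some false ∧ (y = some true ∨ y = none),
   fun x b => x = some true ∧ b = false⟩

lemma dlit_none {l : DLit ι Bool} (h : DLit.sat (Mg ι) none l) :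
    DLit.sat (Mg ι) (some true) l := by
  cases l with
  | top => trivial
  | atom p => exact absurd h.1 (by simp)
  | dia i l => obtain ⟨v, ⟨hv, _⟩, _⟩ := h; exact absurd hv (by simp)

lemma dlit_transfer (l : DLit ι Bool) (x : Bool) :
    DLit.sat (Mb ι) x l ↔ DLit.sat (Mg ι) (some x) l := by
  induction l generalizing x with
  | top => simp [DLit.sat]
  | atom p => simp [DLit.sat, Mb, Mg]
  | dia i l ih =>
    constructor
    · rintro ⟨v, ⟨hx, hv⟩, hs⟩
      subst hx; subst hv
      exact ⟨some true, ⟨rfl, Or.inl rfl⟩, (ih true).mp hs⟩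
    · rintro ⟨v, ⟨hx, hv⟩, hs⟩
      have hx' : x = false := by injection hx
      subst hx'
      rcases hv with rfl | rfl
      · exact ⟨true, ⟨rfl, rfl⟩, (ih true).mpr hs⟩
      · exact ⟨true, ⟨rfl, rfl⟩, (ih true).mpr (dlit_none hs)⟩

lemma sdlit_transfer (l : SDLit ι Bool) (x : Bool) :
    SDLit.sat (Mb ι) x l ↔ SDLit.sat (Mg ι) (some x) l := by
  unfold SDLit.sat
  split <;> simp [dlit_transfer]

lemma nabla_sim (L : List ι) :
    ∀ (x : Bool) (Φ : Bool → Prop) (Φ' : Option Bool → Prop),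
      (∀ y, Φ' (some y) → Φ y) →
      nablaSat (Mg ι) L (some x) Φ' → nablaSat (Mb ι) L x Φ := by
  induction L with
  | nil => intro x Φ Φ' h hs; exact h x hs
  | cons i rest ih =>
    rintro x Φ Φ' h hs v ⟨hx, hv⟩
    subst hx; subst hv
    exact ih true Φ Φ' h (hs (some true) ⟨rfl, Or.inl rfl⟩)

lemma clause_transfer (c : KromDiaClause ι Bool)
    (h : c.sat (Mg ι) (some false)) : c.sat (Mb ι) false := by
  unfold KromDiaClause.sat at h ⊢
  refine nabla_sim c.nabla false _ _ ?_ h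
  intro y hy
  rcases hy with hy | hy
  · exact Or.inl ((sdlit_transfer _ _).mpr hy)
  · refine Or.inr ?_
    cases hl : c.l2 with
    | none => rw [hl] at hy; exact hy
    | some l => rw [hl] at hy; exact (sdlit_transfer _ _).mpr hy

end NoKromDia


/-- no Krom-diamond formula over the alphabet `{p, q}`
(encoded as `Bool`, `p = false`, `q = true`) is equivalent to `□_a p → q`. -/
theorem no_kromDia_translation_of_box_imp (ι : Type) (a : ι) :
    ¬ ∃ φ : List (KromDiaClause ι Bool),
      ∀ (W : Type) (M : KModel ι Bool W) (w : W),
        ((∀ v, M.rel a w v → M.val v false) → M.val w true) ↔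
        kromDiaSat M w φ := by
  rintro ⟨φ, h⟩
  have hb : ¬ kromDiaSat (Mb ι) false φ := by
    rw [← h Bool (Mb ι) false]
    intro htgt
    have := htgt (fun v hv => ⟨hv.2, rfl⟩)
    exact absurd this.1 (by simp)
  have hg : kromDiaSat (Mg ι) (some false) φ := by
    rw [← h (Option Bool) (Mg ι) (some false)]
    intro htgt
    exact absurd (htgt none ⟨rfl, Or.inr rfl⟩).1 (by simp)
  exact hb fun c hc => clause_transfer c (hg c hc)
end

section
/- Equi-satisfiable box-elimination for Krom clauses: let φ = φ₀ ∧ ∇(□_α λ ∨ μ) be a Krom formula over alphabet P, where λ is a positive literal and μ a literal, and let p ∉ P be fresh. Define φ' = φ₀ ∧ ∇(¬◇_α p ∨ μ) ∧ ∇□_α(p ∨ λ). Then for every model M over P and world w: M,w ⊩ φ iff there exists an extension M' of M to P ∪ {p} with M',w ⊩ φ'. -/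
section Aux
variable {ι P W : Type}

lemma nablaSat_mono (M : KModel ι P W) (n : List ι) {Φ Ψ : W → Prop}
    (h : ∀ v, Φ v → Ψ v) : ∀ w, nablaSat M n w Φ → nablaSat M n w Ψ := by
  induction n with
  | nil => exact h
  | cons a rest ih => intro w hw v hv; exact ih v (hw v hv)

lemma nablaSat_mono2 (M : KModel ι P W) (n : List ι) {Φ Ψ X : W → Prop}
    (h : ∀ v, Φ v → Ψ v → X v) :
    ∀ w, nablaSat M n w Φ → nablaSat M n w Ψ → nablaSat M n w X := by
  induction n with
  | nil => exact h
  | cons a rest ih => intro w h1 h2 v hv; exact ih v (h1 v hv) (h2 v hv)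

lemma nablaSat_of_forall (M : KModel ι P W) (n : List ι) {Φ : W → Prop}
    (h : ∀ v, Φ v) : ∀ w, nablaSat M n w Φ := by
  induction n with
  | nil => exact h
  | cons a rest ih => intro w v _; exact ih v

lemma nablaSat_append (M : KModel ι P W) (n : List ι) (a : ι) (Φ : W → Prop) :
    ∀ w, nablaSat M (n ++ [a]) w Φ ↔
      nablaSat M n w (fun v => ∀ u, M.rel a v u → Φ u) := by
  induction n with
  | nil => intro w; rfl
  | cons b rest ih =>
      intro w
      constructor
      · intro h v hv; exact (ih v).1 (h v hv)
      · intro h v hv; exact (ih v).2 (h v hv)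

lemma plit_map_sat (rel : ι → W → W → Prop) (V : W → P → Prop)
    (V' : W → Option P → Prop) (hV : ∀ u q, V' u (some q) ↔ V u q)
    (l : PLit ι P) : ∀ w, PLit.sat ⟨rel, V'⟩ w (l.map some) ↔ PLit.sat ⟨rel, V⟩ w l := by
  induction l with
  | top => intro w; simp [PLit.map, PLit.sat]
  | atom p => intro w; simpa [PLit.map, PLit.sat] using hV w p
  | dia a l ih =>
      intro w
      simp only [PLit.map, PLit.sat]
      exact exists_congr fun v => and_congr_right fun _ => ih v
  | box a l ih =>
      intro w
      simp only [PLit.map, PLit.sat]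
      exact forall_congr' fun v => imp_congr_right fun _ => ih v

lemma slit_map_sat (rel : ι → W → W → Prop) (V : W → P → Prop)
    (V' : W → Option P → Prop) (hV : ∀ u q, V' u (some q) ↔ V u q)
    (l : SLit ι P) (w : W) :
    SLit.sat ⟨rel, V'⟩ w (l.map some) ↔ SLit.sat ⟨rel, V⟩ w l := by
  obtain ⟨pos, lit⟩ := l
  cases pos <;> simp [SLit.sat, SLit.map, plit_map_sat rel V V' hV lit w]

lemma krom_map_sat (rel : ι → W → W → Prop) (V : W → P → Prop)
    (V' : W → Option P → Prop) (hV : ∀ u q, V' u (some q) ↔ V u q)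
    (c : KromClause ι P) (w : W) :
    KromClause.sat ⟨rel, V'⟩ w (c.map some) ↔ KromClause.sat ⟨rel, V⟩ w c := by
  obtain ⟨n, l1, l2⟩ := c
  unfold KromClause.sat KromClause.map
  induction n generalizing w with
  | nil =>
      simp only [nablaSat]
      apply or_congr (slit_map_sat rel V V' hV l1 w)
      cases l2 with
      | none => rfl
      | some l => exact slit_map_sat rel V V' hV l w
  | cons a rest ih =>
      exact forall_congr' fun v => imp_congr_right fun _ => ih v

lemma nablaSat_rel {ι P Q W : Type} (rel : ι → W → W → Prop) (V1 : W → P → Prop)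
    (V2 : W → Q → Prop) (n : List ι) (Φ : W → Prop) :
    ∀ w, nablaSat ⟨rel, V1⟩ n w Φ ↔ nablaSat ⟨rel, V2⟩ n w Φ := by
  induction n with
  | nil => intro w; rfl
  | cons a rest ih => exact fun w => forall_congr' fun v => imp_congr_right fun _ => ih v

end Aux

/-- box-elimination for Krom clauses. Replacing a positive
`□_a λ` in a Krom clause by `¬◇_a p ∨ μ` together with `∇□_a(p ∨ λ)` for a
fresh letter `p` (the alphabet `P` is extended to `Option P`, the fresh
letter being `none`) preserves models up to extension. -/
theorem krom_box_elimination {ι P : Type} (a : ι) (nab : List ι)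
    (lam : PLit ι P) (mu : SLit ι P) (φ₀ : List (KromClause ι P)) :
    ∀ (W : Type) (rel : ι → W → W → Prop) (V : W → P → Prop) (w : W),
      kromSat ⟨rel, V⟩ w (φ₀ ++ [⟨nab, ⟨true, .box a lam⟩, some mu⟩]) ↔
      ∃ V' : W → Option P → Prop,
        (∀ u q, V' u (some q) ↔ V u q) ∧
        kromSat ⟨rel, V'⟩ w
          (φ₀.map (KromClause.map some) ++
            [⟨nab, ⟨false, .dia a (.atom none)⟩, some (mu.map some)⟩,
             ⟨nab ++ [a], ⟨true, .atom none⟩, some ⟨true, lam.map some⟩⟩]) := by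
  intro W rel V w
  constructor
  · intro h
    refine ⟨fun u o => o.elim (¬ PLit.sat ⟨rel, V⟩ u lam) (fun q => V u q),
      fun u q => Iff.rfl, ?_⟩
    set V' : W → Option P → Prop :=
      fun u o => o.elim (¬ PLit.sat ⟨rel, V⟩ u lam) (fun q => V u q) with hV'def
    have hV : ∀ u q, V' u (some q) ↔ V u q := fun u q => Iff.rfl
    intro c hc
    rcases List.mem_append.1 hc with hc | hc
    · obtain ⟨c₀, hc₀, rfl⟩ := List.mem_map.1 hc
      exact (krom_map_sat rel V V' hV c₀ w).2 (h c₀ (List.mem_append_left _ hc₀))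
    · have hmain := h _ (List.mem_append_right _ (List.mem_singleton.2 rfl))
      unfold KromClause.sat at hmain
      simp only [List.mem_cons, List.mem_singleton] at hc
      rcases hc with rfl | rfl | hc
      · -- clause ∇(¬◇p ∨ μ)
        unfold KromClause.sat
        rw [← nablaSat_rel rel V V']
        refine nablaSat_mono ⟨rel, V⟩ nab (fun v hv => ?_) w hmain
        rcases hv with hbox | hmu
        · left
          simp only [SLit.sat, if_true] at hbox
          simp only [SLit.sat, Bool.false_eq_true, if_false, PLit.sat]
          rintro ⟨u, hru, hpu⟩
          exact hpu (hbox u hru)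
        · right
          exact (slit_map_sat rel V V' hV mu v).2 hmu
      · -- clause ∇□(p ∨ λ)
        unfold KromClause.sat
        refine nablaSat_of_forall ⟨rel, V'⟩ _ (fun u => ?_) w
        by_cases hl : PLit.sat ⟨rel, V⟩ u lam
        · right
          simp only [Option.elim]
          simpa [SLit.sat] using (plit_map_sat rel V V' hV lam u).2 hl
        · left
          simpa [SLit.sat, PLit.sat, hV'def] using hl
      · exact absurd hc List.not_mem_nil
  · rintro ⟨V', hV, h'⟩
    intro c hc
    rcases List.mem_append.1 hc with hc | hc
    · have := h' (c.map some)
        (List.mem_append_left _ (List.mem_map.2 ⟨c, hc, rfl⟩))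
      exact (krom_map_sat rel V V' hV c w).1 this
    · rw [List.mem_singleton.1 hc]
      have hc1 := h' _ (List.mem_append_right _ List.mem_cons_self)
      have hc2 := h' _ (List.mem_append_right _
        (List.mem_cons_of_mem _ (List.mem_singleton.2 rfl)))
      unfold KromClause.sat at hc1 hc2 ⊢
      rw [nablaSat_append] at hc2
      rw [nablaSat_rel rel V' V] at hc1 hc2
      refine nablaSat_mono2 ⟨rel, V⟩ nab (fun v h1 h2 => ?_) w hc1 hc2
      rcases h1 with hnd | hmu
      · left
        simp only [SLit.sat, Bool.false_eq_true, if_false, PLit.sat] at hnd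
        simp only [SLit.sat, if_true, PLit.sat]
        intro u hru
        rcases h2 u hru with hp | hl
        · simp only [SLit.sat, if_true, PLit.sat] at hp
          exact absurd ⟨u, hru, hp⟩ hnd
        · simp only [Option.elim, SLit.sat, if_true] at hl
          exact (plit_map_sat rel V V' hV lam u).1 hl
      · right
        exact (slit_map_sat rel V V' hV mu v).1 hmu
end
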